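/- The limit superior as k → ∞ of ĝ(k+1)/ĝ(k) is infinite; equivalently, for every real M there exist infinitely many integers k ≥ 2 with ĝ(k+1)/ĝ(k) > M. -/

import Mathlib

open Finset Filter Real Asymptotics

/-- `digit i p k` is the `i`-th digit of `k` in base `p`, i.e. `⌊k / p^i⌋ mod p`. -/
def digit (i p k : ℕ) : ℕ := (k / p ^ i) % p

/-- `Mk k = ∏_{p ≤ k, p prime} p^(⌊log_p k⌋ + 1)`. -/
def Mk (k : ℕ) : ℕ :=
  ∏ p ∈ (Finset.range (k + 1)).filter Nat.Prime, p ^ (Nat.log p k + 1)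

/-- `Rk k = ∏_{p ≤ k, p prime} ∏_{i=0}^{⌊log_p k⌋} (p − a_{i,p}(k))`. -/
def Rk (k : ℕ) : ℕ :=
  ∏ p ∈ (Finset.range (k + 1)).filter Nat.Prime,
    ∏ i ∈ Finset.range (Nat.log p k + 1), (p - digit i p k)

/-- The heuristic estimate `ĝ(k) = M_k / R_k` for the Erdős–Selfridge function. -/
def ghat (k : ℕ) : ℚ := (Mk k : ℚ) / (Rk k : ℚ)

lemma digit_lt {i q k : ℕ} (hq : 0 < q) : digit i q k < q := Nat.mod_lt _ hq

lemma Rk_pos (k : ℕ) : 0 < Rk k := by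
  apply Finset.prod_pos
  intro q hq
  have hq2 : q.Prime := (Finset.mem_filter.mp hq).2
  apply Finset.prod_pos
  intro i _
  have := digit_lt (i := i) (q := q) (k := k) hq2.pos
  omega

lemma Mk_pos (k : ℕ) : 0 < Mk k := by
  apply Finset.prod_pos
  intro q hq
  exact pow_pos (Finset.mem_filter.mp hq).2.pos _

lemma prime_filter_succ {p : ℕ} (hp : p.Prime) :
    (Finset.range (p+1)).filter Nat.Prime = insert p ((Finset.range p).filter Nat.Prime) := by
  ext q
  simp only [Finset.mem_filter, Finset.mem_range, Finset.mem_insert]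
  constructor
  · rintro ⟨h1, h2⟩
    rcases eq_or_ne q p with h | h
    · exact Or.inl h
    · exact Or.inr ⟨by omega, h2⟩
  · rintro (rfl | ⟨h1, h2⟩)
    · exact ⟨by omega, hp⟩
    · exact ⟨by omega, h2⟩

lemma not_dvd_of_lt {p q : ℕ} (hp : p.Prime) (hq : q.Prime) (hqp : q < p) : ¬ q ∣ p := by
  intro h
  have := (Nat.prime_dvd_prime_iff_eq hq hp).mp h
  omega

lemma log_pred_eq {p q : ℕ} (hp : p.Prime) (hq : q.Prime) (hqp : q < p) :
    Nat.log q p = Nat.log q (p - 1) := by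
  have h1 : 1 < q := hq.one_lt
  have hp2 : 2 ≤ p := hp.two_le
  set L := Nat.log q (p - 1) with hL
  have h2 : p - 1 < q ^ (L + 1) := Nat.lt_pow_succ_log_self h1 _
  have h4 : p ≠ q ^ (L + 1) := by
    intro h
    exact not_dvd_of_lt hp hq hqp (h ▸ dvd_pow_self q (Nat.succ_ne_zero L))
  have h5 : Nat.log q p < L + 1 := Nat.log_lt_of_lt_pow hp.pos.ne' (by omega)
  have h6 : L ≤ Nat.log q p := Nat.log_mono_right (by omega)
  omega

lemma digit_succ_pred {p q : ℕ} (hp : p.Prime) (hq : q.Prime) (hqp : q < p) (i : ℕ) :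
    digit (i+1) q p = digit (i+1) q (p-1) := by
  have hnd : ¬ q ^ (i+1) ∣ p := by
    intro h
    exact not_dvd_of_lt hp hq hqp ((dvd_pow_self q (Nat.succ_ne_zero i)).trans h)
  have hdiv : p / q ^ (i+1) = (p-1) / q ^ (i+1) := by
    conv_lhs => rw [show p = (p-1) + 1 by have := hp.two_le; omega]
    rw [Nat.succ_div, if_neg (by rwa [show p - 1 + 1 = p by have := hp.two_le; omega])]
    omega
  unfold digit
  rw [hdiv]

lemma digit_zero_pred {p q : ℕ} (hp : p.Prime) (hq : q.Prime) (hqp : q < p) :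
    digit 0 q p = digit 0 q (p-1) + 1 ∧ digit 0 q (p-1) + 1 ≤ q - 1 := by
  have h1 : 1 < q := hq.one_lt
  have hp2 : 2 ≤ p := hp.two_le
  have hnd : ¬ q ∣ p := not_dvd_of_lt hp hq hqp
  have hmod : p % q = ((p-1) % q + 1) % q := by
    conv_lhs => rw [show p = (p-1) + 1 by omega]
    rw [Nat.add_mod, Nat.mod_eq_of_lt h1]
  have hr : (p-1) % q < q := Nat.mod_lt _ (by omega)
  have hne : (p-1) % q + 1 ≠ q := by
    intro h
    apply hnd
    apply Nat.dvd_of_mod_eq_zero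
    rw [hmod, h, Nat.mod_self]
  have hlt : (p-1) % q + 1 < q := by omega
  have : p % q = (p-1) % q + 1 := by rw [hmod, Nat.mod_eq_of_lt hlt]
  constructor
  · simpa [digit] using this
  · simp only [digit, pow_zero, Nat.div_one]
    omega

lemma log_self_one {p : ℕ} (hp : p.Prime) : Nat.log p p = 1 := by
  apply Nat.log_eq_of_pow_le_of_lt_pow
  · simp
  · have h2 := hp.two_le
    have : p < p * p := by nlinarith
    calc p < p * p := this
    _ = p ^ (1+1) := by ring

lemma Mk_succ {p : ℕ} (hp : p.Prime) : Mk p = p ^ 2 * Mk (p - 1) := by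
  have hp2 := hp.two_le
  unfold Mk
  rw [show p - 1 + 1 = p by omega, prime_filter_succ hp,
    Finset.prod_insert (by simp)]
  congr 1
  · rw [log_self_one hp]
  · apply Finset.prod_congr rfl
    intro q hq
    rw [log_pred_eq hp (Finset.mem_filter.mp hq).2 (Finset.mem_range.mp (Finset.mem_filter.mp hq).1)]

lemma Rk_pred_eq {p : ℕ} (hp : p.Prime) :
    Rk (p - 1) = ∏ q ∈ (Finset.range p).filter Nat.Prime,
      ((∏ i ∈ Finset.range (Nat.log q (p-1)), (q - digit (i+1) q (p-1)))
        * (q - digit 0 q (p-1))) := by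
  have hp2 := hp.two_le
  unfold Rk
  rw [show p - 1 + 1 = p by omega]
  exact Finset.prod_congr rfl fun q _ => Finset.prod_range_succ' _ _

lemma Rk_self_eq {p : ℕ} (hp : p.Prime) :
    Rk p = (p * (p - 1)) * ∏ q ∈ (Finset.range p).filter Nat.Prime,
      ((∏ i ∈ Finset.range (Nat.log q (p-1)), (q - digit (i+1) q (p-1)))
        * (q - (digit 0 q (p-1) + 1))) := by
  have hp2 := hp.two_le
  unfold Rk
  rw [prime_filter_succ hp, Finset.prod_insert (by simp)]
  congr 1
  · rw [log_self_one hp]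
    have h0 : digit 0 p p = 0 := by simp [digit, Nat.mod_self]
    have h1 : digit 1 p p = 1 := by
      simp [digit, Nat.div_self hp.pos, Nat.mod_eq_of_lt hp.one_lt]
    rw [show (1:ℕ)+1 = 2 from rfl, Finset.prod_range_succ, Finset.prod_range_one, h0, h1]
    simp
  · apply Finset.prod_congr rfl
    intro q hq
    have hqpr : q.Prime := (Finset.mem_filter.mp hq).2
    have hqlt : q < p := Finset.mem_range.mp (Finset.mem_filter.mp hq).1
    rw [log_pred_eq hp hqpr hqlt, Finset.prod_range_succ' _ _]
    congr 1
    · exact Finset.prod_congr rfl fun i _ => by rw [digit_succ_pred hp hqpr hqlt]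
    · rw [(digit_zero_pred hp hqpr hqlt).1]

lemma one_le_sub_digit {i q k : ℕ} (hq : 0 < q) : 1 ≤ q - digit i q k := by
  have := digit_lt (i := i) (q := q) (k := k) hq
  omega

lemma T_pos {p q : ℕ} (hq : q.Prime) :
    0 < ∏ i ∈ Finset.range (Nat.log q (p-1)), (q - digit (i+1) q (p-1)) :=
  Finset.prod_pos fun i _ => one_le_sub_digit hq.pos

lemma key_ineq {p : ℕ} (hp : p.Prime) (S : Finset ℕ) (hSpr : ∀ q ∈ S, q.Prime)
    (hdvd : ∀ q ∈ S, q ∣ p - 1) (hp3 : 3 ≤ p) (C : ℕ)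
    (hC : C * ∏ q ∈ S, (q - 1) < ∏ q ∈ S, q) :
    C * Rk p < p ^ 2 * Rk (p - 1) := by
  set F := (Finset.range p).filter Nat.Prime with hF
  set T : ℕ → ℕ := fun q => ∏ i ∈ Finset.range (Nat.log q (p-1)), (q - digit (i+1) q (p-1))
    with hT
  set d : ℕ → ℕ := fun q => digit 0 q (p-1) with hd
  have hSF : S ⊆ F := by
    intro q hq
    have hqpr := hSpr q hq
    have hqle : q ≤ p - 1 := Nat.le_of_dvd (by omega) (hdvd q hq)
    exact Finset.mem_filter.mpr ⟨Finset.mem_range.mpr (by omega), hqpr⟩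
  -- facts for q ∈ F
  have hdle : ∀ q ∈ F, d q + 1 ≤ q - 1 := by
    intro q hq
    exact (digit_zero_pred hp (Finset.mem_filter.mp hq).2
      (Finset.mem_range.mp (Finset.mem_filter.mp hq).1)).2
  have hTpos : ∀ q ∈ F, 0 < T q := fun q hq => T_pos (Finset.mem_filter.mp hq).2
  have hdS : ∀ q ∈ S, d q = 0 := by
    intro q hq
    have hqpos : 0 < q := (hSpr q hq).pos
    simp only [hd, digit, pow_zero, Nat.div_one]
    exact Nat.mod_eq_zero_of_dvd (hdvd q hq)
  -- core product inequality
  have hmain : C * ∏ q ∈ F, (T q * (q - (d q + 1))) < ∏ q ∈ F, (T q * (q - d q)) := by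
    rw [← Finset.prod_sdiff hSF, ← Finset.prod_sdiff hSF]
    have hSg : ∏ q ∈ S, (T q * (q - (d q + 1))) = (∏ q ∈ S, T q) * ∏ q ∈ S, (q - 1) := by
      rw [← Finset.prod_mul_distrib]
      exact Finset.prod_congr rfl fun q hq => by rw [hdS q hq]
    have hSf : ∏ q ∈ S, (T q * (q - d q)) = (∏ q ∈ S, T q) * ∏ q ∈ S, q := by
      rw [← Finset.prod_mul_distrib]
      apply Finset.prod_congr rfl fun q hq => by rw [hdS q hq, Nat.sub_zero]
    rw [hSg, hSf]
    have hTSpos : 0 < ∏ q ∈ S, T q := Finset.prod_pos fun q hq => hTpos q (hSF hq)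
    have hgpos : 0 < ∏ q ∈ F \ S, (T q * (q - (d q + 1))) := by
      apply Finset.prod_pos
      intro q hq
      have hqF := (Finset.mem_sdiff.mp hq).1
      have h1 := hdle q hqF
      have h2 := hTpos q hqF
      have : 0 < q - (d q + 1) := by
        have := (Finset.mem_filter.mp hqF).2.two_le
        omega
      positivity
    calc C * ((∏ q ∈ F \ S, (T q * (q - (d q + 1)))) * ((∏ q ∈ S, T q) * ∏ q ∈ S, (q - 1)))
        = (∏ q ∈ F \ S, (T q * (q - (d q + 1)))) * ((∏ q ∈ S, T q) * (C * ∏ q ∈ S, (q - 1))) := by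
          ring
      _ < (∏ q ∈ F \ S, (T q * (q - (d q + 1)))) * ((∏ q ∈ S, T q) * ∏ q ∈ S, q) := by
          exact mul_lt_mul_of_pos_left (mul_lt_mul_of_pos_left hC hTSpos) hgpos
      _ ≤ (∏ q ∈ F \ S, (T q * (q - d q))) * ((∏ q ∈ S, T q) * ∏ q ∈ S, q) := by
          apply Nat.mul_le_mul_right
          apply Finset.prod_le_prod
          · intro q hq; exact Nat.zero_le _
          · intro q hq
            exact Nat.mul_le_mul_left _ (by omega)
      _ = (∏ q ∈ F \ S, (T q * (q - d q))) * ((∏ q ∈ S, T q) * ∏ q ∈ S, q) := rfl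
  -- assemble
  rw [Rk_self_eq hp, Rk_pred_eq hp]
  have hpp : 0 < p * (p - 1) := Nat.mul_pos hp.pos (by have := hp.two_le; omega)
  calc C * (p * (p - 1) * ∏ q ∈ F, (T q * (q - (d q + 1))))
      = (p * (p - 1)) * (C * ∏ q ∈ F, (T q * (q - (d q + 1)))) := by ring
    _ < (p * (p - 1)) * ∏ q ∈ F, (T q * (q - d q)) := by
        exact mul_lt_mul_of_pos_left hmain hpp
    _ ≤ p ^ 2 * ∏ q ∈ F, (T q * (q - d q)) := by
        apply Nat.mul_le_mul_right
        have := hp.two_le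
        nlinarith [Nat.sub_le p 1]

lemma ghat_ratio {p : ℕ} (hp : p.Prime) :
    ((ghat p : ℝ)) / ((ghat (p-1) : ℝ)) = ((p:ℝ) ^ 2 * (Rk (p-1) : ℝ)) / (Rk p : ℝ) := by
  have h1 : (0:ℝ) < (Mk (p-1) : ℝ) := by exact_mod_cast Mk_pos _
  have h2 : (0:ℝ) < (Rk (p-1) : ℝ) := by exact_mod_cast Rk_pos _
  have h3 : (0:ℝ) < (Rk p : ℝ) := by exact_mod_cast Rk_pos _
  rw [ghat, ghat, Mk_succ hp]
  push_cast
  field_simp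

lemma one_add_sum_le_prod (S : Finset ℕ) (f : ℕ → ℝ) (hf : ∀ q ∈ S, 0 ≤ f q) :
    1 + ∑ q ∈ S, f q ≤ ∏ q ∈ S, (1 + f q) := by
  classical
  induction S using Finset.induction_on with
  | empty => simp
  | @insert a s hx ih =>
    rw [Finset.prod_insert hx, Finset.sum_insert hx]
    have ih' := ih fun q hq => hf q (Finset.mem_insert_of_mem hq)
    have hfa : 0 ≤ f a := hf a (Finset.mem_insert_self a s)
    have hs : 0 ≤ ∑ q ∈ s, f q :=
      Finset.sum_nonneg fun q hq => hf q (Finset.mem_insert_of_mem hq)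
    nlinarith

/-- `limsup_{k→∞} ĝ(k+1)/ĝ(k) = ∞`: for every real `M` there are infinitely many
integers `k ≥ 2` with `ĝ(k+1)/ĝ(k) > M`. -/
theorem limsup_ghat_ratio_infinite :
    ∀ M : ℝ, {k : ℕ | 2 ≤ k ∧ M < ((ghat (k + 1) : ℝ) / (ghat k : ℝ))}.Infinite := by
  intro M
  set C : ℕ := ⌈M⌉₊ + 1 with hCdef
  have hMC : M < (C : ℝ) := by
    have := Nat.le_ceil M
    push_cast [hCdef]
    linarith
  -- a finite set of primes with reciprocal sum exceeding C
  have hnn : ∀ m : ℕ, 0 ≤ Set.indicator {p : ℕ | p.Prime} (fun m : ℕ => 1 / (m:ℝ)) m :=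
    fun m => Set.indicator_nonneg (fun a _ => by positivity) m
  have ht : Tendsto (fun n => ∑ i ∈ Finset.range n,
      Set.indicator {p : ℕ | p.Prime} (fun m : ℕ => 1 / (m:ℝ)) i) atTop atTop := by
    by_contra hT
    exact not_summable_one_div_on_primes
      ((summable_iff_not_tendsto_nat_atTop_of_nonneg hnn).mpr hT)
  obtain ⟨n, hn⟩ := (ht.eventually_gt_atTop (C:ℝ)).exists
  set S := (Finset.range n).filter Nat.Prime with hSdef
  have hSpr : ∀ q ∈ S, q.Prime := fun q hq => (Finset.mem_filter.mp hq).2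
  have hsum : (C:ℝ) < ∑ q ∈ S, 1 / (q:ℝ) := by
    have : ∑ i ∈ Finset.range n, Set.indicator {p : ℕ | p.Prime} (fun m : ℕ => 1 / (m:ℝ)) i
        = ∑ q ∈ S, 1 / (q:ℝ) := by
      rw [hSdef, Finset.sum_filter]
      exact Finset.sum_congr rfl fun i _ => by simp [Set.indicator_apply]
    rwa [this] at hn
  -- real product inequality
  have hprodpos : (0:ℝ) < ∏ q ∈ S, ((q:ℝ) - 1) := by
    apply Finset.prod_pos
    intro q hq
    have : (2:ℝ) ≤ (q:ℝ) := by exact_mod_cast (hSpr q hq).two_le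
    linarith
  have hprodR : (C:ℝ) * ∏ q ∈ S, ((q:ℝ) - 1) < ∏ q ∈ S, (q:ℝ) := by
    have step1 : (C:ℝ) < ∏ q ∈ S, ((q:ℝ) / ((q:ℝ) - 1)) := by
      have h1 : 1 + ∑ q ∈ S, 1/(q:ℝ) ≤ ∏ q ∈ S, (1 + 1/(q:ℝ)) :=
        one_add_sum_le_prod S _ fun q hq => by positivity
      have h2 : ∏ q ∈ S, (1 + 1/(q:ℝ)) ≤ ∏ q ∈ S, ((q:ℝ) / ((q:ℝ) - 1)) := by
        apply Finset.prod_le_prod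
        · intro q hq; positivity
        · intro q hq
          have hq2 : (2:ℝ) ≤ (q:ℝ) := by exact_mod_cast (hSpr q hq).two_le
          have hq0 : (0:ℝ) < (q:ℝ) := by linarith
          have hq1 : (0:ℝ) < (q:ℝ) - 1 := by linarith
          rw [one_add_div hq0.ne', div_le_div_iff₀ hq0 hq1]
          nlinarith
      linarith
    rw [Finset.prod_div_distrib] at step1
    exact (lt_div_iff₀ hprodpos).mp step1
  have hprodN : C * ∏ q ∈ S, (q - 1) < ∏ q ∈ S, q := by
    have hc : ((∏ q ∈ S, (q-1) : ℕ) : ℝ) = ∏ q ∈ S, ((q:ℝ) - 1) := by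
      rw [Nat.cast_prod]
      exact Finset.prod_congr rfl fun q hq => by
        rw [Nat.cast_sub (hSpr q hq).one_le, Nat.cast_one]
    exact Nat.cast_lt (α := ℝ) |>.mp
      (by rw [Nat.cast_mul, hc, Nat.cast_prod]; exact hprodR)
  -- Dirichlet
  set Q := ∏ q ∈ S, q with hQdef
  have hQpos : 0 < Q := Finset.prod_pos fun q hq => (hSpr q hq).pos
  haveI : NeZero Q := ⟨by omega⟩
  have hdir : {p : ℕ | p.Prime ∧ ((p : ZMod Q) = 1)}.Infinite :=
    Nat.infinite_setOfPred_prime_and_eq_mod isUnit_one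
  have hD : ({p : ℕ | p.Prime ∧ ((p : ZMod Q) = 1)} \ Set.Iic (Q + 2)).Infinite :=
    hdir.diff (Set.finite_Iic _)
  have hinj : Set.InjOn (fun p => p - 1)
      ({p : ℕ | p.Prime ∧ ((p : ZMod Q) = 1)} \ Set.Iic (Q + 2)) := by
    intro a ha b hb hab
    have ha2 : Q + 2 < a := by simpa using ha.2
    have hb2 : Q + 2 < b := by simpa using hb.2
    simp only at hab
    omega
  refine Set.Infinite.mono ?_ (hD.image hinj)
  rintro _ ⟨p, ⟨⟨hp, hmod⟩, hgt⟩, rfl⟩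
  have hgt' : Q + 2 < p := by simpa using hgt
  have hp1 : 1 ≤ p := hp.one_le
  have hQdvd : Q ∣ p - 1 := by
    have hz : ((p - 1 : ℕ) : ZMod Q) = 0 := by
      rw [Nat.cast_sub hp1, hmod]
      simp
    exact (ZMod.natCast_eq_zero_iff _ _).mp hz
  constructor
  · show 2 ≤ p - 1
    omega
  · show M < (ghat (p - 1 + 1) : ℝ) / (ghat (p - 1) : ℝ)
    rw [show p - 1 + 1 = p by omega, ghat_ratio hp]
    have hkey : C * Rk p < p ^ 2 * Rk (p - 1) :=
      key_ineq hp S hSpr (fun q hq => (Finset.dvd_prod_of_mem _ hq).trans hQdvd)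
        (by omega) C hprodN
    have h3 : (0:ℝ) < (Rk p : ℝ) := by exact_mod_cast Rk_pos _
    have : (C:ℝ) < ((p:ℝ) ^ 2 * (Rk (p-1) : ℝ)) / (Rk p : ℝ) := by
      rw [lt_div_iff₀ h3]
      exact_mod_cast hkey
    linarith
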